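/- Penalization bounds: let p, q be probability densities with supp(p) = [a,b], supp(q) = [a,c], b < c, |p(x) − q(x)| < δ for x ∈ [a,b], and ∫_b^c q = ε. Then 1 − (1−ε)/(1 − δ(b−a)) ≤ d_1(p,q) ≤ 1 − (1 − ε − δ(b−a))/(1 + δ(b−a)), assuming δ(b−a) < 1. -/

import Mathlib

open MeasureTheory

theorem penalization_bounds
    (p q : ℝ → ℝ) (a b c δ ε : ℝ)
    (hab : a < b) (hbc : b < c)
    (hpm : Measurable p) (hqm : Measurable q)
    (hpi : Integrable p) (hqi : Integrable q)
    (hp : ∀ x, 0 ≤ p x) (hq : ∀ x, 0 ≤ q x)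
    (hpint : (∫ x, p x) = 1) (hqint : (∫ x, q x) = 1)
    (hpsupp : ∀ x, x ∉ Set.Icc a b → p x = 0)
    (hqsupp : ∀ x, x ∉ Set.Icc a c → q x = 0)
    (hδ : ∀ x ∈ Set.Icc a b, |p x - q x| < δ)
    (hε : (∫ x in Set.Ioc b c, q x) = ε)
    (hδsmall : δ * (b - a) < 1) :
    1 - (1 - ε) / (1 - δ * (b - a)) ≤
      1 - (∫ x, min (p x) (q x)) / (∫ x, max (p x) (q x)) ∧
    1 - (∫ x, min (p x) (q x)) / (∫ x, max (p x) (q x)) ≤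
      1 - (1 - ε - δ * (b - a)) / (1 + δ * (b - a)) := by
  have hba : (0:ℝ) < b - a := sub_pos.2 hab
  have hδpos : 0 < δ := lt_of_le_of_lt (abs_nonneg _) (hδ a ⟨le_refl a, hab.le⟩)
  have hΔ0 : 0 ≤ δ * (b - a) := mul_nonneg hδpos.le hba.le
  set Δ := δ * (b - a) with hΔdef
  -- integrability
  have hmin_i : Integrable (fun x => min (p x) (q x)) := hpi.inf hqi
  have hmax_i : Integrable (fun x => max (p x) (q x)) := hpi.sup hqi
  set I := ∫ x, min (p x) (q x) with hI
  set J := ∫ x, max (p x) (q x) with hJ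
  have hdisj : Disjoint (Set.Icc a b) (Set.Ioc b c) := by
    rw [Set.disjoint_left]; rintro x ⟨_, h1⟩ ⟨h2, _⟩; exact absurd h1 (not_le.2 h2)
  have hIccIoc : Set.Icc a b ∪ Set.Ioc b c = Set.Icc a c :=
    Set.Icc_union_Ioc_eq_Icc hab.le hbc.le
  -- volume of Icc a b
  have hvol : ∫ x in Set.Icc a b, δ = δ * (b - a) := by
    rw [setIntegral_const, Real.volume_real_Icc_of_le hab.le, smul_eq_mul,
      mul_comm]
  -- ε ≥ 0
  have hε0 : 0 ≤ ε := by
    rw [← hε]; exact setIntegral_nonneg measurableSet_Ioc fun x _ => hq x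
  -- ∫ q over Icc a b = 1 - ε
  have hqacc : ∫ x in Set.Icc a c, q x = 1 := by
    rw [setIntegral_eq_integral_of_forall_compl_eq_zero hqsupp, hqint]
  have hqab : ∫ x in Set.Icc a b, q x = 1 - ε := by
    have := setIntegral_union hdisj measurableSet_Ioc hqi.integrableOn hqi.integrableOn
    rw [hIccIoc, hqacc, hε] at this
    linarith
  -- I = ∫ min over Icc a b
  have hImin : I = ∫ x in Set.Icc a b, min (p x) (q x) := by
    rw [hI, setIntegral_eq_integral_of_forall_compl_eq_zero]
    intro x hx
    rw [hpsupp x hx, min_eq_left (hq x)]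
  have hI0 : 0 ≤ I :=
    integral_nonneg fun x => le_min (hp x) (hq x)
  -- I ≤ 1 - ε
  have hIle : I ≤ 1 - ε := by
    rw [hImin, ← hqab]
    exact setIntegral_mono_on hmin_i.integrableOn hqi.integrableOn measurableSet_Icc
      fun x _ => min_le_right _ _
  -- I ≥ 1 - ε - Δ
  have hIge : 1 - ε - Δ ≤ I := by
    have h1 : ∫ x in Set.Icc a b, (q x - δ) = 1 - ε - Δ := by
      rw [integral_sub hqi.integrableOn (integrableOn_const (by
        rw [Real.volume_Icc]; exact ENNReal.ofReal_ne_top)), hqab, hvol]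
    rw [hImin, ← h1]
    refine setIntegral_mono_on (Integrable.sub hqi.integrableOn (integrableOn_const
      (by rw [Real.volume_Icc]; exact ENNReal.ofReal_ne_top)))
      hmin_i.integrableOn measurableSet_Icc fun x hx => ?_
    have habs := abs_lt.1 (hδ x hx)
    exact le_min (by linarith [habs.1]) (by linarith)
  -- J ≥ 1
  have hJge : 1 ≤ J := by
    rw [hJ, ← hqint]
    exact integral_mono hqi hmax_i fun x => le_max_right _ _
  have hJpos : 0 < J := lt_of_lt_of_le one_pos hJge
  -- J ≤ 1 + Δ
  have hJle : J ≤ 1 + Δ := by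
    have hJacc : J = ∫ x in Set.Icc a c, max (p x) (q x) := by
      rw [hJ, setIntegral_eq_integral_of_forall_compl_eq_zero]
      intro x hx
      have hxb : x ∉ Set.Icc a b := by
        intro h; exact hx ⟨h.1, le_trans h.2 hbc.le⟩
      rw [hpsupp x hxb, hqsupp x hx, max_self]
    have hsplit := setIntegral_union hdisj measurableSet_Ioc hmax_i.integrableOn
      hmax_i.integrableOn (f := fun x => max (p x) (q x))
    rw [hIccIoc, ← hJacc] at hsplit
    have htail : ∫ x in Set.Ioc b c, max (p x) (q x) = ε := by
      rw [← hε]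
      refine setIntegral_congr_fun measurableSet_Ioc fun x hx => ?_
      have hxb : x ∉ Set.Icc a b := fun h => absurd h.2 (not_le.2 hx.1)
      rw [hpsupp x hxb, max_eq_right (hq x)]
    have hhead : ∫ x in Set.Icc a b, max (p x) (q x) ≤ 1 - ε + Δ := by
      have h2 : ∫ x in Set.Icc a b, (q x + δ) = 1 - ε + Δ := by
        rw [integral_add hqi.integrableOn (integrableOn_const (by
          rw [Real.volume_Icc]; exact ENNReal.ofReal_ne_top)), hqab, hvol]
      rw [← h2]
      refine setIntegral_mono_on hmax_i.integrableOn (Integrable.add hqi.integrableOn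
        (integrableOn_const (by rw [Real.volume_Icc]; exact ENNReal.ofReal_ne_top)))
        measurableSet_Icc fun x hx => ?_
      have habs := abs_lt.1 (hδ x hx)
      exact max_le (by linarith [habs.2]) (by linarith)
    rw [hsplit, htail] at *
    linarith
  -- final arithmetic
  have hΔlt : Δ < 1 := hδsmall
  constructor
  · have h1 : I / J ≤ (1 - ε) / (1 - Δ) := by
      rw [div_le_div_iff₀ hJpos (by linarith)]
      nlinarith [mul_nonneg hI0 hΔ0, mul_nonneg (by linarith : (0:ℝ) ≤ 1 - ε)
        (by linarith : (0:ℝ) ≤ J - 1)]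
    linarith
  · have h2 : (1 - ε - Δ) / (1 + Δ) ≤ I / J := by
      rw [div_le_div_iff₀ (by linarith) hJpos]
      nlinarith [mul_nonneg (by linarith : (0:ℝ) ≤ I - (1 - ε - Δ)) hJpos.le,
        mul_nonneg hI0 (by linarith : (0:ℝ) ≤ 1 + Δ - J)]
    linarith
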